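/- The drift function F of the graph mean field model is Lipschitz in the sup norm: for all states s, ŝ, ‖F(s) − F(ŝ)‖_∞ ≤ C·‖s − ŝ‖_∞ with C = 3x_cλ(1 + k_max/k̄) + 2μ. -/

import Mathlib

open Finset Filter

/-- `zfun K p kbar s k i` is the quantity `z_{k,i+1}(s)` of the graph mean field model:
`(1/2) * Σ_{k'∈K} ((k'+k)/k̄) p(k') (s_{k',i} + s_{k',i+1})`. -/
noncomputable def zfun (K : Finset ℕ) (p : ℕ → ℝ) (kbar : ℝ) (s : ℕ → ℕ → ℝ) (k i : ℕ) : ℝ :=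
  (1/2) * ∑ k' ∈ K, (((k' : ℝ) + (k : ℝ)) / kbar) * p k' * (s k' i + s k' (i+1))

/-- The drift function of the graph mean field model is Lipschitz in the sup norm with
constant `C = 3 x_cλ (1 + k_max/k̄) + 2μ` (drift stated at level `i+1`, i.e. for all `i ≥ 1`;
the level-0 drift is identically zero). -/
theorem drift_lipschitz (K : Finset ℕ) (p : ℕ → ℝ)
    (hp : ∀ k ∈ K, 0 ≤ p k) (hpsum : ∑ k ∈ K, p k = 1)
    (kbar : ℝ) (hkbar : kbar = ∑ k ∈ K, p k * (k : ℝ)) (hkpos : 0 < kbar)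
    (kmax : ℕ) (hkmaxmem : kmax ∈ K) (hkmax : ∀ k ∈ K, k ≤ kmax)
    (xcl mu : ℝ) (hx : 0 < xcl) (hmu : 0 < mu)
    (s t : ℕ → ℕ → ℝ)
    (hs0 : ∀ k, s k 0 = 1) (hsmono : ∀ k i, s k (i+1) ≤ s k i)
    (hsnn : ∀ k i, 0 ≤ s k i) (hsle1 : ∀ k i, s k i ≤ 1)
    (ht0 : ∀ k, t k 0 = 1) (htmono : ∀ k i, t k (i+1) ≤ t k i)
    (htnn : ∀ k i, 0 ≤ t k i) (htle1 : ∀ k i, t k i ≤ 1)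
    (d : ℝ) (hd : 0 ≤ d) (hdist : ∀ k i, |s k i - t k i| ≤ d) :
    ∀ k ∈ K, ∀ i : ℕ,
      |(xcl * (s k i - s k (i+1)) * zfun K p kbar s k i - mu * (s k (i+1) - s k (i+2)))
        - (xcl * (t k i - t k (i+1)) * zfun K p kbar t k i - mu * (t k (i+1) - t k (i+2)))|
      ≤ (3 * xcl * (1 + (kmax : ℝ) / kbar) + 2 * mu) * d := by
  intro k hk i
  set M : ℝ := 1 + (kmax : ℝ) / kbar with hM
  have hMnn : 0 ≤ M := by positivity
  have hc : ∀ k' ∈ K, 0 ≤ ((k' : ℝ) + (k : ℝ)) / kbar * p k' := by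
    intro k' hk'
    have := hp k' hk'
    positivity
  have hcsum : ∑ k' ∈ K, ((k' : ℝ) + (k : ℝ)) / kbar * p k' ≤ M := by
    have heq : ∑ k' ∈ K, ((k' : ℝ) + (k : ℝ)) / kbar * p k'
        = ((∑ k' ∈ K, p k' * (k' : ℝ)) + (k : ℝ) * ∑ k' ∈ K, p k') / kbar := by
      rw [Finset.mul_sum, ← Finset.sum_add_distrib, Finset.sum_div]
      exact Finset.sum_congr rfl fun k' _ => by ring
    rw [heq, ← hkbar, hpsum, hM]
    rw [div_le_iff₀ hkpos]
    have hkk : (k : ℝ) ≤ (kmax : ℝ) := by exact_mod_cast hkmax k hk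
    have : (1 + (kmax : ℝ) / kbar) * kbar = kbar + (kmax : ℝ) := by
      field_simp
    rw [this]
    linarith
  -- bound zfun t between 0 and M
  have hztnn : 0 ≤ zfun K p kbar t k i := by
    unfold zfun
    have : ∀ k' ∈ K, 0 ≤ ((k' : ℝ) + (k : ℝ)) / kbar * p k' * (t k' i + t k' (i+1)) := by
      intro k' hk'
      have h1 := hc k' hk'
      have h2 := htnn k' i
      have h3 := htnn k' (i+1)
      nlinarith
    have := Finset.sum_nonneg this
    linarith
  have hztle : zfun K p kbar t k i ≤ M := by
    unfold zfun
    have hterm : ∀ k' ∈ K, ((k' : ℝ) + (k : ℝ)) / kbar * p k' * (t k' i + t k' (i+1))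
        ≤ ((k' : ℝ) + (k : ℝ)) / kbar * p k' * 2 := by
      intro k' hk'
      have h1 := hc k' hk'
      have h2 := htle1 k' i
      have h3 := htle1 k' (i+1)
      nlinarith
    have := Finset.sum_le_sum hterm
    have h2 : ∑ k' ∈ K, ((k' : ℝ) + (k : ℝ)) / kbar * p k' * 2
        = 2 * ∑ k' ∈ K, ((k' : ℝ) + (k : ℝ)) / kbar * p k' := by
      rw [Finset.mul_sum]; exact Finset.sum_congr rfl fun k' _ => by ring
    rw [h2] at this
    nlinarith
  -- bound |zfun s - zfun t| ≤ M * d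
  have hzdiff : |zfun K p kbar s k i - zfun K p kbar t k i| ≤ M * d := by
    unfold zfun
    rw [← mul_sub, ← Finset.sum_sub_distrib]
    have heq : ∀ k' ∈ K,
        ((k' : ℝ) + (k : ℝ)) / kbar * p k' * (s k' i + s k' (i+1))
          - ((k' : ℝ) + (k : ℝ)) / kbar * p k' * (t k' i + t k' (i+1))
        = ((k' : ℝ) + (k : ℝ)) / kbar * p k' * ((s k' i - t k' i) + (s k' (i+1) - t k' (i+1))) := by
      intro k' _; ring
    rw [Finset.sum_congr rfl heq]
    have habs : |∑ k' ∈ K, ((k' : ℝ) + (k : ℝ)) / kbar * p k' *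
        ((s k' i - t k' i) + (s k' (i+1) - t k' (i+1)))|
        ≤ ∑ k' ∈ K, ((k' : ℝ) + (k : ℝ)) / kbar * p k' * (2 * d) := by
      refine (Finset.abs_sum_le_sum_abs _ _).trans (Finset.sum_le_sum fun k' hk' => ?_)
      rw [abs_mul, abs_of_nonneg (hc k' hk')]
      refine mul_le_mul_of_nonneg_left ?_ (hc k' hk')
      calc |(s k' i - t k' i) + (s k' (i+1) - t k' (i+1))|
          ≤ |s k' i - t k' i| + |s k' (i+1) - t k' (i+1)| := abs_add_le _ _
        _ ≤ d + d := add_le_add (hdist k' i) (hdist k' (i+1))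
        _ = 2 * d := by ring
    have hsum2 : ∑ k' ∈ K, ((k' : ℝ) + (k : ℝ)) / kbar * p k' * (2 * d)
        = (2 * d) * ∑ k' ∈ K, ((k' : ℝ) + (k : ℝ)) / kbar * p k' := by
      rw [Finset.mul_sum]; exact Finset.sum_congr rfl fun k' _ => by ring
    rw [abs_mul]
    have h12 : |(1 : ℝ)/2| = 1/2 := by norm_num
    rw [h12]
    calc (1/2) * |∑ k' ∈ K, ((k' : ℝ) + (k : ℝ)) / kbar * p k' *
          ((s k' i - t k' i) + (s k' (i+1) - t k' (i+1)))|
        ≤ (1/2) * ((2 * d) * ∑ k' ∈ K, ((k' : ℝ) + (k : ℝ)) / kbar * p k') := by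
          rw [← hsum2]; linarith [habs]
      _ ≤ (1/2) * ((2 * d) * M) := by nlinarith
      _ = M * d := by ring
  set A := s k i - s k (i+1) with hA
  set B := t k i - t k (i+1) with hB
  have hAnn : 0 ≤ A := by simp [hA]; linarith [hsmono k i]
  have hAle : A ≤ 1 := by
    have := hsnn k (i+1); have := hsle1 k i; simp [hA]; linarith
  have hABd : |A - B| ≤ 2 * d := by
    have h1 := hdist k i
    have h2 := hdist k (i+1)
    have : A - B = (s k i - t k i) - (s k (i+1) - t k (i+1)) := by rw [hA, hB]; ring
    rw [this]
    calc |(s k i - t k i) - (s k (i+1) - t k (i+1))|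
        ≤ |s k i - t k i| + |s k (i+1) - t k (i+1)| := abs_sub _ _
      _ ≤ d + d := add_le_add h1 h2
      _ = 2 * d := by ring
  have hmain : |A * zfun K p kbar s k i - B * zfun K p kbar t k i| ≤ 3 * M * d := by
    have hsplit : A * zfun K p kbar s k i - B * zfun K p kbar t k i
        = A * (zfun K p kbar s k i - zfun K p kbar t k i) + (A - B) * zfun K p kbar t k i := by
      ring
    rw [hsplit]
    calc |A * (zfun K p kbar s k i - zfun K p kbar t k i) + (A - B) * zfun K p kbar t k i|
        ≤ |A * (zfun K p kbar s k i - zfun K p kbar t k i)|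
          + |(A - B) * zfun K p kbar t k i| := abs_add_le _ _
      _ ≤ 1 * (M * d) + (2 * d) * M := by
          rw [abs_mul, abs_mul]
          have h1 : |A| ≤ 1 := by rw [abs_of_nonneg hAnn]; exact hAle
          have h2 : |zfun K p kbar t k i| ≤ M := by rw [abs_of_nonneg hztnn]; exact hztle
          have h3 := mul_le_mul h1 hzdiff (abs_nonneg _) zero_le_one
          nlinarith [abs_nonneg (A - B), abs_nonneg (zfun K p kbar t k i), abs_nonneg A,
            mul_le_mul h1 hzdiff (abs_nonneg _) zero_le_one,
            mul_le_mul hABd h2 (abs_nonneg _) (by positivity : (0:ℝ) ≤ 2 * d)]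
      _ = 3 * M * d := by ring
  have hmu2 : |(s k (i+1) - s k (i+2)) - (t k (i+1) - t k (i+2))| ≤ 2 * d := by
    have h1 := hdist k (i+1)
    have h2 := hdist k (i+2)
    have heq : (s k (i+1) - s k (i+2)) - (t k (i+1) - t k (i+2))
        = (s k (i+1) - t k (i+1)) - (s k (i+2) - t k (i+2)) := by ring
    rw [heq]
    calc |(s k (i+1) - t k (i+1)) - (s k (i+2) - t k (i+2))|
        ≤ |s k (i+1) - t k (i+1)| + |s k (i+2) - t k (i+2)| := abs_sub _ _
      _ ≤ d + d := add_le_add h1 h2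
      _ = 2 * d := by ring
  have hexpr : (xcl * (s k i - s k (i+1)) * zfun K p kbar s k i - mu * (s k (i+1) - s k (i+2)))
      - (xcl * (t k i - t k (i+1)) * zfun K p kbar t k i - mu * (t k (i+1) - t k (i+2)))
      = xcl * (A * zfun K p kbar s k i - B * zfun K p kbar t k i)
        - mu * ((s k (i+1) - s k (i+2)) - (t k (i+1) - t k (i+2))) := by
    rw [hA, hB]; ring
  rw [hexpr]
  calc |xcl * (A * zfun K p kbar s k i - B * zfun K p kbar t k i)
        - mu * ((s k (i+1) - s k (i+2)) - (t k (i+1) - t k (i+2)))|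
      ≤ |xcl * (A * zfun K p kbar s k i - B * zfun K p kbar t k i)|
        + |mu * ((s k (i+1) - s k (i+2)) - (t k (i+1) - t k (i+2)))| := abs_sub _ _
    _ ≤ xcl * (3 * M * d) + mu * (2 * d) := by
        rw [abs_mul, abs_mul, abs_of_pos hx, abs_of_pos hmu]
        gcongr
    _ = (3 * xcl * M + 2 * mu) * d := by ring
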